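/- Under the same orthogonality assumptions, the spectral norm of the residual R = U_{m+1} H_{m+1,m} E_m* Y V_m* + U_m Y E_m G_{m+1,m}* V_{m+1}* satisfies ‖R‖₂ = max{‖H_{m+1,m} E_m* Y‖₂, ‖Y E_m G_{m+1,m}*‖₂}. -/

import Mathlib

open Matrix
open scoped ComplexOrder

noncomputable def specNorm {m n : Type*} [Fintype m] [Fintype n] [DecidableEq n]
    (M : Matrix m n ℂ) : ℝ :=
  ‖LinearMap.toContinuousLinearMap (Matrix.toEuclideanLin M)‖

/-- The block matrix `E_m = e_m ⊗ I_s`. -/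
noncomputable def Em (m s : ℕ) : Matrix (Fin m × Fin s) (Fin s) ℂ :=
  fun p j => if p.1.val = m - 1 ∧ p.2 = j then 1 else 0

section SpecNormAux

open scoped Matrix.Norms.L2Operator
set_option linter.unusedSectionVars false

variable {α β γ δ : Type*} [Fintype α] [Fintype β] [Fintype γ] [Fintype δ]
  [DecidableEq α] [DecidableEq β] [DecidableEq γ] [DecidableEq δ]

lemma specNorm_eq_l2norm (M : Matrix α β ℂ) : specNorm M = ‖M‖ := rfl

lemma norm_isometry_mul (W : Matrix α β ℂ) (hW : Wᴴ * W = 1) (M : Matrix β γ ℂ) :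
    ‖W * M‖ = ‖M‖ := by
  have h1 : (W * M)ᴴ * (W * M) = Mᴴ * M := by
    rw [conjTranspose_mul]
    calc Mᴴ * Wᴴ * (W * M) = Mᴴ * (Wᴴ * W) * M := by simp only [Matrix.mul_assoc]
    _ = Mᴴ * M := by rw [hW, Matrix.mul_one]
  have h2 := Matrix.l2_opNorm_conjTranspose_mul_self (W * M)
  have h3 := Matrix.l2_opNorm_conjTranspose_mul_self M
  rw [h1, h3] at h2
  nlinarith [norm_nonneg (W * M), norm_nonneg M]

lemma matrix_norm_one_le : ‖(1 : Matrix α α ℂ)‖ ≤ 1 := by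
  rw [Matrix.cstar_norm_def, _root_.map_one]
  exact ContinuousLinearMap.norm_id_le

lemma norm_isometry_le_one (W : Matrix α β ℂ) (hW : Wᴴ * W = 1) : ‖W‖ ≤ 1 := by
  have h := Matrix.l2_opNorm_conjTranspose_mul_self W
  rw [hW] at h
  have h1 : ‖(1 : Matrix β β ℂ)‖ ≤ 1 := matrix_norm_one_le
  nlinarith [norm_nonneg W]

lemma euclid_sum_sq (y : EuclideanSpace ℂ (α ⊕ β)) :
    ‖y‖ ^ 2 =
      ‖((WithLp.equiv 2 (α → ℂ)).symm fun i => y (Sum.inl i) : EuclideanSpace ℂ α)‖ ^ 2 +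
      ‖((WithLp.equiv 2 (β → ℂ)).symm fun i => y (Sum.inr i) : EuclideanSpace ℂ β)‖ ^ 2 := by
  simp only [EuclideanSpace.norm_eq]
  rw [Real.sq_sqrt (by positivity), Real.sq_sqrt (by positivity), Real.sq_sqrt (by positivity)]
  rw [Fintype.sum_sum_type]
  rfl

lemma norm_fromBlocks_diag_le (P : Matrix α γ ℂ) (Q : Matrix β δ ℂ) :
    ‖fromBlocks P 0 0 Q‖ ≤ max ‖P‖ ‖Q‖ := by
  have hc : (0:ℝ) ≤ max ‖P‖ ‖Q‖ := le_max_of_le_left (norm_nonneg _)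
  rw [Matrix.l2_opNorm_def]
  refine ContinuousLinearMap.opNorm_le_bound _ hc ?_
  intro x
  set x₁ : EuclideanSpace ℂ γ := (WithLp.equiv 2 (γ → ℂ)).symm fun i => x (Sum.inl i) with hx₁
  set x₂ : EuclideanSpace ℂ δ := (WithLp.equiv 2 (δ → ℂ)).symm fun i => x (Sum.inr i) with hx₂
  have hx : ‖x‖ ^ 2 = ‖x₁‖ ^ 2 + ‖x₂‖ ^ 2 := euclid_sum_sq x
  set T := (Matrix.toEuclideanLin.trans LinearMap.toContinuousLinearMap) (fromBlocks P 0 0 Q)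
  have hT1 : (fun i => T x (Sum.inl i)) = P *ᵥ (WithLp.equiv 2 (γ → ℂ) x₁) := by
    funext i
    show (fromBlocks P 0 0 Q *ᵥ (WithLp.equiv 2 _ x)) (Sum.inl i) = _
    rw [fromBlocks_mulVec]
    simp only [Sum.elim_inl, zero_mulVec, add_zero]
    rfl
  have hT2 : (fun i => T x (Sum.inr i)) = Q *ᵥ (WithLp.equiv 2 (δ → ℂ) x₂) := by
    funext i
    show (fromBlocks P 0 0 Q *ᵥ (WithLp.equiv 2 _ x)) (Sum.inr i) = _
    rw [fromBlocks_mulVec]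
    simp only [Sum.elim_inr, zero_mulVec, zero_add]
    rfl
  have hTx : ‖T x‖ ^ 2 =
      ‖((WithLp.equiv 2 (α → ℂ)).symm (P *ᵥ WithLp.equiv 2 (γ → ℂ) x₁) : EuclideanSpace ℂ α)‖ ^ 2 +
      ‖((WithLp.equiv 2 (β → ℂ)).symm (Q *ᵥ WithLp.equiv 2 (δ → ℂ) x₂) : EuclideanSpace ℂ β)‖ ^ 2 := by
    rw [euclid_sum_sq (T x), hT1, hT2]
  have hP : ‖((WithLp.equiv 2 (α → ℂ)).symm (P *ᵥ WithLp.equiv 2 (γ → ℂ) x₁) : EuclideanSpace ℂ α)‖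
      ≤ ‖P‖ * ‖x₁‖ := Matrix.l2_opNorm_mulVec P x₁
  have hQ : ‖((WithLp.equiv 2 (β → ℂ)).symm (Q *ᵥ WithLp.equiv 2 (δ → ℂ) x₂) : EuclideanSpace ℂ β)‖
      ≤ ‖Q‖ * ‖x₂‖ := Matrix.l2_opNorm_mulVec Q x₂
  have hsq : ‖T x‖ ^ 2 ≤ (max ‖P‖ ‖Q‖) ^ 2 * ‖x‖ ^ 2 := by
    rw [hTx, hx]
    have h1 : ‖P‖ ≤ max ‖P‖ ‖Q‖ := le_max_left _ _
    have h2 : ‖Q‖ ≤ max ‖P‖ ‖Q‖ := le_max_right _ _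
    have hP2 : ‖((WithLp.equiv 2 (α → ℂ)).symm (P *ᵥ WithLp.equiv 2 (γ → ℂ) x₁) : EuclideanSpace ℂ α)‖ ^ 2
        ≤ (max ‖P‖ ‖Q‖) ^ 2 * ‖x₁‖ ^ 2 := by
      calc _ ≤ (‖P‖ * ‖x₁‖) ^ 2 := pow_le_pow_left₀ (norm_nonneg _) hP 2
        _ = ‖P‖ ^ 2 * ‖x₁‖ ^ 2 := by ring
        _ ≤ (max ‖P‖ ‖Q‖) ^ 2 * ‖x₁‖ ^ 2 :=
          mul_le_mul_of_nonneg_right (pow_le_pow_left₀ (norm_nonneg P) h1 2) (sq_nonneg _)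
    have hQ2 : ‖((WithLp.equiv 2 (β → ℂ)).symm (Q *ᵥ WithLp.equiv 2 (δ → ℂ) x₂) : EuclideanSpace ℂ β)‖ ^ 2
        ≤ (max ‖P‖ ‖Q‖) ^ 2 * ‖x₂‖ ^ 2 := by
      calc _ ≤ (‖Q‖ * ‖x₂‖) ^ 2 := pow_le_pow_left₀ (norm_nonneg _) hQ 2
        _ = ‖Q‖ ^ 2 * ‖x₂‖ ^ 2 := by ring
        _ ≤ (max ‖P‖ ‖Q‖) ^ 2 * ‖x₂‖ ^ 2 :=
          mul_le_mul_of_nonneg_right (pow_le_pow_left₀ (norm_nonneg Q) h2 2) (sq_nonneg _)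
    linarith [hP2, hQ2, mul_add ((max ‖P‖ ‖Q‖) ^ 2) (‖x₁‖ ^ 2) (‖x₂‖ ^ 2)]
  have h0 := norm_nonneg (T x)
  nlinarith [norm_nonneg x, mul_nonneg hc (norm_nonneg x)]

end SpecNormAux

section Main

open scoped Matrix.Norms.L2Operator

set_option maxHeartbeats 2000000 in
/-- Cheap spectral-norm residual formula for the Galerkin approximation from block Arnoldi:
`‖R‖₂ = max{‖H_{m+1,m} E_m* Y‖₂, ‖Y E_m G_{m+1,m}*‖₂}`. -/
theorem sylvester_residual_spectral_norm {n m s : ℕ} (hm : 0 < m)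
    (Um Vm : Matrix (Fin n) (Fin m × Fin s) ℂ)
    (U1 V1 : Matrix (Fin n) (Fin s) ℂ)
    (Y : Matrix (Fin m × Fin s) (Fin m × Fin s) ℂ)
    (H1 G1 : Matrix (Fin s) (Fin s) ℂ)
    (R : Matrix (Fin n) (Fin n) ℂ)
    (hUm : Umᴴ * Um = 1) (hVm : Vmᴴ * Vm = 1)
    (hU1 : U1ᴴ * U1 = 1) (hV1 : V1ᴴ * V1 = 1)
    (hUorth : U1ᴴ * Um = 0) (hVorth : V1ᴴ * Vm = 0)
    (hR : R = U1 * H1 * (Em m s)ᴴ * Y * Vmᴴ + Um * Y * (Em m s) * G1ᴴ * V1ᴴ) :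
    specNorm R = max (specNorm (H1 * (Em m s)ᴴ * Y)) (specNorm (Y * (Em m s) * G1ᴴ)) := by
  set A := H1 * (Em m s)ᴴ * Y with hA
  set B := Y * Em m s * G1ᴴ with hB
  have hR' : R = U1 * A * Vmᴴ + Um * B * V1ᴴ := by
    rw [hR, hA, hB]; simp only [Matrix.mul_assoc]
  have hVmV1 : Vmᴴ * V1 = 0 := by
    have h := congrArg conjTranspose hVorth
    simpa [conjTranspose_mul] using h
  have hUmU1 : Umᴴ * U1 = 0 := by
    have h := congrArg conjTranspose hUorth
    simpa [conjTranspose_mul] using h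
  set W := fromCols Vm V1 with hWdef
  set C := fromCols (U1 * A) (Um * B) with hCdef
  have hWW : Wᴴ * W = 1 := by
    rw [hWdef, conjTranspose_fromCols_eq_fromRows_conjTranspose, fromRows_mul_fromCols,
      hVm, hV1, hVmV1, hVorth, fromBlocks_one]
  have hRC : R = C * Wᴴ := by
    rw [hWdef, hCdef, conjTranspose_fromCols_eq_fromRows_conjTranspose,
      fromCols_mul_fromRows, hR']
  have hCC : Cᴴ * C = fromBlocks (Aᴴ * A) 0 0 (Bᴴ * B) := by
    rw [hCdef, conjTranspose_fromCols_eq_fromRows_conjTranspose, fromRows_mul_fromCols]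
    have e11 : (U1 * A)ᴴ * (U1 * A) = Aᴴ * A := by
      rw [conjTranspose_mul]
      calc Aᴴ * U1ᴴ * (U1 * A) = Aᴴ * (U1ᴴ * U1) * A := by simp only [Matrix.mul_assoc]
      _ = Aᴴ * A := by rw [hU1, Matrix.mul_one]
    have e12 : (U1 * A)ᴴ * (Um * B) = 0 := by
      rw [conjTranspose_mul]
      calc Aᴴ * U1ᴴ * (Um * B) = Aᴴ * (U1ᴴ * Um) * B := by simp only [Matrix.mul_assoc]
      _ = 0 := by rw [hUorth, Matrix.mul_zero, Matrix.zero_mul]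
    have e21 : (Um * B)ᴴ * (U1 * A) = 0 := by
      rw [conjTranspose_mul]
      calc Bᴴ * Umᴴ * (U1 * A) = Bᴴ * (Umᴴ * U1) * A := by simp only [Matrix.mul_assoc]
      _ = 0 := by rw [hUmU1, Matrix.mul_zero, Matrix.zero_mul]
    have e22 : (Um * B)ᴴ * (Um * B) = Bᴴ * B := by
      rw [conjTranspose_mul]
      calc Bᴴ * Umᴴ * (Um * B) = Bᴴ * (Umᴴ * Um) * B := by simp only [Matrix.mul_assoc]
      _ = Bᴴ * B := by rw [hUm, Matrix.mul_one]
    rw [e11, e12, e21, e22]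
  -- upper bound
  have hCle : ‖C‖ ≤ max ‖A‖ ‖B‖ := by
    have h2 := Matrix.l2_opNorm_conjTranspose_mul_self C
    rw [hCC] at h2
    have h3 := norm_fromBlocks_diag_le (Aᴴ * A) (Bᴴ * B)
    rw [Matrix.l2_opNorm_conjTranspose_mul_self A, Matrix.l2_opNorm_conjTranspose_mul_self B] at h3
    have hmaxnn : (0:ℝ) ≤ max ‖A‖ ‖B‖ := le_max_of_le_left (norm_nonneg _)
    have hle : ‖C‖ * ‖C‖ ≤ (max ‖A‖ ‖B‖) * (max ‖A‖ ‖B‖) := by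
      rw [← h2]
      refine h3.trans ?_
      rcases max_cases (‖A‖ * ‖A‖) (‖B‖ * ‖B‖) with ⟨h, _⟩ | ⟨h, _⟩ <;> rw [h] <;>
        nlinarith [le_max_left ‖A‖ ‖B‖, le_max_right ‖A‖ ‖B‖, norm_nonneg A, norm_nonneg B]
    nlinarith [norm_nonneg C]
  have upper : ‖R‖ ≤ max ‖A‖ ‖B‖ := by
    rw [hRC]
    have h1 : ‖C * Wᴴ‖ ≤ ‖C‖ * ‖Wᴴ‖ := Matrix.l2_opNorm_mul C Wᴴ
    have h2 : ‖Wᴴ‖ ≤ 1 := by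
      rw [Matrix.l2_opNorm_conjTranspose]
      exact norm_isometry_le_one W hWW
    calc ‖C * Wᴴ‖ ≤ ‖C‖ * ‖Wᴴ‖ := h1
    _ ≤ ‖C‖ * 1 := mul_le_mul_of_nonneg_left h2 (norm_nonneg C)
    _ = ‖C‖ := mul_one _
    _ ≤ max ‖A‖ ‖B‖ := hCle
  -- lower bounds
  have hRVm : R * Vm = U1 * A := by
    rw [hR', Matrix.add_mul, Matrix.mul_assoc (U1 * A) Vmᴴ Vm, Matrix.mul_assoc (Um * B) V1ᴴ Vm,
      hVm, hVorth, Matrix.mul_one, Matrix.mul_zero, add_zero]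
  have hRV1 : R * V1 = Um * B := by
    rw [hR', Matrix.add_mul, Matrix.mul_assoc (U1 * A) Vmᴴ V1, Matrix.mul_assoc (Um * B) V1ᴴ V1,
      hV1, hVmV1, Matrix.mul_one, Matrix.mul_zero, zero_add]
  have lA : ‖A‖ ≤ ‖R‖ := by
    have h1 : ‖A‖ = ‖R * Vm‖ := by rw [hRVm, norm_isometry_mul U1 hU1 A]
    have h2 : ‖R * Vm‖ ≤ ‖R‖ * ‖Vm‖ := Matrix.l2_opNorm_mul R Vm
    have h3 : ‖Vm‖ ≤ 1 := norm_isometry_le_one Vm hVm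
    calc ‖A‖ = ‖R * Vm‖ := h1
    _ ≤ ‖R‖ * ‖Vm‖ := h2
    _ ≤ ‖R‖ * 1 := mul_le_mul_of_nonneg_left h3 (norm_nonneg R)
    _ = ‖R‖ := mul_one _
  have lB : ‖B‖ ≤ ‖R‖ := by
    have h1 : ‖B‖ = ‖R * V1‖ := by rw [hRV1, norm_isometry_mul Um hUm B]
    have h3 : ‖V1‖ ≤ 1 := norm_isometry_le_one V1 hV1
    calc ‖B‖ = ‖R * V1‖ := h1
    _ ≤ ‖R‖ * ‖V1‖ := Matrix.l2_opNorm_mul R V1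
    _ ≤ ‖R‖ * 1 := mul_le_mul_of_nonneg_left h3 (norm_nonneg R)
    _ = ‖R‖ := mul_one _
  rw [specNorm_eq_l2norm, specNorm_eq_l2norm, specNorm_eq_l2norm]
  exact le_antisymm upper (max_le lA lB)

end Main
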